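/- For the operators S*_{n,a}, one has S*_{n,a}(e_3; x) = x·log(a)·((a^(1/n)−1)² + 3(a^(1/n)−1)·x·log a + x²(log a)²) / ((a^(1/n)−1)³ · n³) for all x ≥ 0, where e_3(t) = t³. -/

import Mathlib

open Real Filter

private lemma exp_tsum (y : ℝ) : ∑' k : ℕ, y ^ k / (Nat.factorial k : ℝ) = Real.exp y := by
  rw [Real.exp_eq_exp_ℝ, NormedSpace.exp_eq_tsum_div]

private lemma sum0 (y : ℝ) : Summable (fun k : ℕ => y ^ k / (Nat.factorial k : ℝ)) :=
  Real.summable_pow_div_factorial y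

private lemma fact_succ (k : ℕ) :
    (Nat.factorial (k+1) : ℝ) = ((k:ℝ)+1) * (Nat.factorial k : ℝ) := by
  push_cast [Nat.factorial_succ]; ring

private lemma fact_ne (k : ℕ) : (Nat.factorial k : ℝ) ≠ 0 :=
  Nat.cast_ne_zero.2 (Nat.factorial_ne_zero k)

private lemma shift1 (y : ℝ) (k : ℕ) :
    ((k:ℝ)+1) * y ^ (k+1) / (Nat.factorial (k+1) : ℝ) = y * (y ^ k / (Nat.factorial k : ℝ)) := by
  have hk1 : ((k:ℝ)+1) ≠ 0 := by positivity
  rw [fact_succ]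
  field_simp [fact_succ, fact_ne k]
  ring

private lemma shift2 (y : ℝ) (k : ℕ) :
    ((k:ℝ)+1)^2 * y ^ (k+1) / (Nat.factorial (k+1) : ℝ)
      = y * ((k:ℝ) * y ^ k / (Nat.factorial k : ℝ) + y ^ k / (Nat.factorial k : ℝ)) := by
  have hk1 : ((k:ℝ)+1) ≠ 0 := by positivity
  rw [fact_succ]
  field_simp [fact_succ, fact_ne k]
  ring

private lemma shift3 (y : ℝ) (k : ℕ) :
    ((k:ℝ)+1)^3 * y ^ (k+1) / (Nat.factorial (k+1) : ℝ)
      = y * ((k:ℝ)^2 * y ^ k / (Nat.factorial k : ℝ)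
          + 2 * ((k:ℝ) * y ^ k / (Nat.factorial k : ℝ)) + y ^ k / (Nat.factorial k : ℝ)) := by
  have hk1 : ((k:ℝ)+1) ≠ 0 := by positivity
  rw [fact_succ]
  field_simp [fact_succ, fact_ne k]
  ring

private lemma sum1 (y : ℝ) : Summable (fun k : ℕ => (k:ℝ) * y ^ k / (Nat.factorial k : ℝ)) := by
  rw [← summable_nat_add_iff 1]
  have : (fun k : ℕ => ((k+1:ℕ):ℝ) * y ^ (k+1) / (Nat.factorial (k+1) : ℝ))
      = fun k : ℕ => y * (y ^ k / (Nat.factorial k : ℝ)) := by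
    funext k; push_cast; exact shift1 y k
  rw [this]
  exact (sum0 y).mul_left y

private lemma sum2 (y : ℝ) : Summable (fun k : ℕ => (k:ℝ)^2 * y ^ k / (Nat.factorial k : ℝ)) := by
  rw [← summable_nat_add_iff 1]
  have : (fun k : ℕ => ((k+1:ℕ):ℝ)^2 * y ^ (k+1) / (Nat.factorial (k+1) : ℝ))
      = fun k : ℕ => y * ((k:ℝ) * y ^ k / (Nat.factorial k : ℝ) + y ^ k / (Nat.factorial k : ℝ)) := by
    funext k; push_cast; exact shift2 y k
  rw [this]
  exact ((sum1 y).add (sum0 y)).mul_left y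

private lemma sum3 (y : ℝ) : Summable (fun k : ℕ => (k:ℝ)^3 * y ^ k / (Nat.factorial k : ℝ)) := by
  rw [← summable_nat_add_iff 1]
  have : (fun k : ℕ => ((k+1:ℕ):ℝ)^3 * y ^ (k+1) / (Nat.factorial (k+1) : ℝ))
      = fun k : ℕ => y * ((k:ℝ)^2 * y ^ k / (Nat.factorial k : ℝ)
          + 2 * ((k:ℝ) * y ^ k / (Nat.factorial k : ℝ)) + y ^ k / (Nat.factorial k : ℝ)) := by
    funext k; push_cast; exact shift3 y k
  rw [this]
  exact (((sum2 y).add ((sum1 y).mul_left 2)).add (sum0 y)).mul_left y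

private lemma tsum1 (y : ℝ) :
    ∑' k : ℕ, (k:ℝ) * y ^ k / (Nat.factorial k : ℝ) = y * Real.exp y := by
  rw [Summable.tsum_eq_zero_add (sum1 y)]
  simp only [Nat.cast_add, Nat.cast_one, Nat.cast_zero]
  have : (fun k : ℕ => ((k:ℝ)+1) * y ^ (k+1) / (Nat.factorial (k+1) : ℝ))
      = fun k : ℕ => y * (y ^ k / (Nat.factorial k : ℝ)) := funext (shift1 y)
  rw [this, tsum_mul_left, exp_tsum]
  simp

private lemma tsum2 (y : ℝ) :
    ∑' k : ℕ, (k:ℝ)^2 * y ^ k / (Nat.factorial k : ℝ) = (y + y^2) * Real.exp y := by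
  rw [Summable.tsum_eq_zero_add (sum2 y)]
  simp only [Nat.cast_add, Nat.cast_one, Nat.cast_zero]
  have : (fun k : ℕ => ((k:ℝ)+1)^2 * y ^ (k+1) / (Nat.factorial (k+1) : ℝ))
      = fun k : ℕ => y * ((k:ℝ) * y ^ k / (Nat.factorial k : ℝ) + y ^ k / (Nat.factorial k : ℝ)) :=
    funext (shift2 y)
  rw [this, tsum_mul_left, Summable.tsum_add (sum1 y) (sum0 y), tsum1, exp_tsum]
  ring

private lemma tsum3 (y : ℝ) :
    ∑' k : ℕ, (k:ℝ)^3 * y ^ k / (Nat.factorial k : ℝ) = (y + 3*y^2 + y^3) * Real.exp y := by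
  rw [Summable.tsum_eq_zero_add (sum3 y)]
  simp only [Nat.cast_add, Nat.cast_one, Nat.cast_zero]
  have : (fun k : ℕ => ((k:ℝ)+1)^3 * y ^ (k+1) / (Nat.factorial (k+1) : ℝ))
      = fun k : ℕ => y * ((k:ℝ)^2 * y ^ k / (Nat.factorial k : ℝ)
          + 2 * ((k:ℝ) * y ^ k / (Nat.factorial k : ℝ)) + y ^ k / (Nat.factorial k : ℝ)) :=
    funext (shift3 y)
  rw [this, tsum_mul_left, Summable.tsum_add ((sum2 y).add ((sum1 y).mul_left 2)) (sum0 y),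
    Summable.tsum_add (sum2 y) ((sum1 y).mul_left 2), tsum_mul_left, tsum1, tsum2, exp_tsum]
  ring

noncomputable def szasz (a : ℝ) (n : ℕ) (f : ℝ → ℝ) (x : ℝ) : ℝ :=
  ∑' k : ℕ, a ^ (-x / (a ^ ((1:ℝ)/n) - 1)) *
    (x * Real.log a) ^ k / ((a ^ ((1:ℝ)/n) - 1) ^ k * (Nat.factorial k : ℝ)) * f (k / n)

theorem stmt_4 (a : ℝ) (ha : 1 < a) (n : ℕ) (hn : 1 ≤ n) (x : ℝ) (hx : 0 ≤ x) :
    szasz a n (fun t => t ^ 3) x =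
      x * Real.log a * ((a ^ ((1:ℝ)/n) - 1) ^ 2
        + 3 * (a ^ ((1:ℝ)/n) - 1) * (x * Real.log a)
        + x ^ 2 * Real.log a ^ 2) /
        ((a ^ ((1:ℝ)/n) - 1) ^ 3 * n ^ 3) := by
  have hnpos : (0:ℝ) < n := by exact_mod_cast hn
  have hnne : (n:ℝ) ≠ 0 := hnpos.ne'
  set c := a ^ ((1:ℝ)/n) - 1 with hc
  have hcpos : 0 < c := by
    have h1 : 1 < a ^ ((1:ℝ)/n) :=
      (Real.one_lt_rpow_iff_of_pos (by linarith)).2 (Or.inl ⟨ha, by positivity⟩)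
    simp only [hc]; linarith
  have hcne : c ≠ 0 := hcpos.ne'
  set L := Real.log a with hL
  set y := x * L / c with hy
  have hxy : x * L = y * c := by rw [hy, div_mul_cancel₀ _ hcne]
  have hterm : ∀ k : ℕ,
      a ^ (-x / c) * (x * L) ^ k / (c ^ k * (Nat.factorial k : ℝ)) * ((k:ℝ) / (n:ℝ)) ^ 3
        = Real.exp (-y) / (n:ℝ) ^ 3 * ((k:ℝ) ^ 3 * y ^ k / (Nat.factorial k : ℝ)) := by
    intro k
    have hexp : a ^ (-x / c) = Real.exp (-y) := by
      rw [Real.rpow_def_of_pos (by linarith : (0:ℝ) < a)]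
      congr 1
      rw [hy]
      field_simp
      rw [hL]; ring
    rw [hexp, hxy, mul_pow]
    have hck : c ^ k ≠ 0 := pow_ne_zero k hcne
    field_simp [fact_ne k]
  rw [szasz, tsum_congr hterm, tsum_mul_left, tsum3]
  have he : Real.exp y ≠ 0 := (Real.exp_pos y).ne'
  rw [Real.exp_neg, hy]
  field_simp
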